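/- arXiv:2008.07502 — 3 statements merged into one kernel-verified Lean document; each statement's English description precedes it below -/
import Mathlib

section
/- Let R₀ > 0 and let D ⊂ ℝⁿ be a measurable set with |D| = |B(0,R₀)| = ωₙR₀ⁿ and finite second moment M₂[1_D] = ∫_D |x|² dx. Let D* = B(0,R₀) be the centered ball of the same volume. Then M₂[1_D] − M₂[1_{D*}] ≥ (1/(2n ωₙ R₀^{n−2})) |D Δ D*|², where D Δ D* is the symmetric difference. -/
open MeasureTheory

open Set Metric


lemma aux_amgm {q s : ℝ} (hq : q ≤ 0 ∨ q = 1) (h0 : 0 ≤ s) (h1 : s < 1) :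
    2 ≤ (1+s) ^ q + (1-s) ^ q := by
  rcases hq with hq | rfl
  · have hx : (0:ℝ) < 1 + s := by linarith
    have hy : (0:ℝ) < 1 - s := by linarith
    have hA : (0:ℝ) < (1+s) ^ q := Real.rpow_pos_of_pos hx q
    have hB : (0:ℝ) < (1-s) ^ q := Real.rpow_pos_of_pos hy q
    have hmul : (1:ℝ) ≤ (1+s) ^ q * (1-s) ^ q := by
      rw [← Real.mul_rpow hx.le hy.le]
      have h2 : (1+s) * (1-s) ≤ 1 := by nlinarith
      exact Real.one_le_rpow_of_pos_of_le_one_of_nonpos (by nlinarith) h2 hq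
    nlinarith [sq_nonneg ((1+s)^q - (1-s)^q)]
  · simp [Real.rpow_one]; linarith

lemma aux_G {p : ℝ} (hp : 0 < p) (hp1 : p ≤ 1 ∨ p = 2) {t : ℝ}
    (ht : t ∈ Set.Icc (0:ℝ) 1) : 2*p*t ≤ (1+t)^p - (1-t)^p := by
  set G : ℝ → ℝ := fun s => (1+s)^p - (1-s)^p - 2*p*s with hG
  have hcont : Continuous G := by
    have h1 : Continuous fun x : ℝ => x ^ p :=
      continuous_iff_continuousAt.2 fun x => Real.continuousAt_rpow_const _ _ (Or.inr hp.le)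
    exact ((h1.comp (continuous_const.add continuous_id)).sub
      (h1.comp (continuous_const.sub continuous_id))).sub (by continuity)
  have hderiv : ∀ s ∈ Set.Ioo (0:ℝ) 1, HasDerivAt G
      (p*(1+s)^(p-1) + p*(1-s)^(p-1) - 2*p) s := by
    intro s hs
    have hx : (1:ℝ) + s ≠ 0 := by nlinarith [hs.1]
    have hy : (1:ℝ) - s ≠ 0 := by nlinarith [hs.2]
    have d1 : HasDerivAt (fun s : ℝ => (1+s)^p) (p*(1+s)^(p-1)) s := by
      have := (Real.hasDerivAt_rpow_const (x := 1+s) (p := p) (Or.inl hx)).comp s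
        ((hasDerivAt_id s).const_add 1)
      simpa [Function.comp_def] using this
    have d2 : HasDerivAt (fun s : ℝ => (1-s)^p) (-(p*(1-s)^(p-1))) s := by
      have := (Real.hasDerivAt_rpow_const (x := 1-s) (p := p) (Or.inl hy)).comp s
        ((hasDerivAt_id s).const_sub 1)
      simpa [Function.comp_def] using this
    have d3 : HasDerivAt (fun s : ℝ => 2*p*s) (2*p) s := by
      simpa using (hasDerivAt_id s).const_mul (2*p)
    have := (d1.sub d2).sub d3
    refine this.congr_deriv ?_
    ring
  have hmono : MonotoneOn G (Set.Icc 0 1) := by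
    apply monotoneOn_of_deriv_nonneg (convex_Icc 0 1) hcont.continuousOn
    · intro s hs
      rw [interior_Icc] at hs
      exact (hderiv s hs).differentiableAt.differentiableWithinAt
    · intro s hs
      rw [interior_Icc] at hs
      rw [(hderiv s hs).deriv]
      have key : 2 ≤ (1+s)^(p-1) + (1-s)^(p-1) := by
        apply aux_amgm _ hs.1.le hs.2
        rcases hp1 with h | h
        · exact Or.inl (by linarith)
        · exact Or.inr (by linarith)
      nlinarith
  have hG0 : G 0 = 0 := by simp [hG]
  have := hmono (Set.left_mem_Icc.2 zero_le_one) ht ht.1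
  rw [hG0] at this
  simp only [hG] at this
  linarith

lemma aux_F {p : ℝ} (hp : 0 < p) (hp1 : p ≤ 1 ∨ p = 2) {t : ℝ}
    (ht0 : 0 ≤ t) (ht1 : t ≤ 1) :
    p*(1+p)*t^2 ≤ (1+t)^(1+p) + (1-t)^(1+p) - 2 := by
  set F : ℝ → ℝ := fun s => (1+s)^(1+p) + (1-s)^(1+p) - 2 - p*(1+p)*s^2 with hF
  have hp1' : (0:ℝ) < 1 + p := by linarith
  have hcont : Continuous F := by
    have h1 : Continuous fun x : ℝ => x ^ (1+p) :=
      continuous_iff_continuousAt.2 fun x => Real.continuousAt_rpow_const _ _ (Or.inr hp1'.le)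
    exact (((h1.comp (continuous_const.add continuous_id)).add
      (h1.comp (continuous_const.sub continuous_id))).sub continuous_const).sub (by continuity)
  have hderiv : ∀ s ∈ Set.Ioo (0:ℝ) 1, HasDerivAt F
      ((1+p)*(1+s)^p - (1+p)*(1-s)^p - 2*(p*(1+p)*s)) s := by
    intro s hs
    have hx : (1:ℝ) + s ≠ 0 := by nlinarith [hs.1]
    have hy : (1:ℝ) - s ≠ 0 := by nlinarith [hs.2]
    have d1 : HasDerivAt (fun s : ℝ => (1+s)^(1+p)) ((1+p)*(1+s)^p) s := by
      have := (Real.hasDerivAt_rpow_const (x := 1+s) (p := 1+p) (Or.inl hx)).comp s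
        ((hasDerivAt_id s).const_add 1)
      simpa [Function.comp_def] using this
    have d2 : HasDerivAt (fun s : ℝ => (1-s)^(1+p)) (-((1+p)*(1-s)^p)) s := by
      have := (Real.hasDerivAt_rpow_const (x := 1-s) (p := 1+p) (Or.inl hy)).comp s
        ((hasDerivAt_id s).const_sub 1)
      simpa [Function.comp_def] using this
    have d3 : HasDerivAt (fun s : ℝ => p*(1+p)*s^2) (p*(1+p)*(2*s)) s := by
      simpa using ((hasDerivAt_pow 2 s)).const_mul (p*(1+p))
    have := ((d1.add d2).sub (hasDerivAt_const s 2)).sub d3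
    refine this.congr_deriv ?_
    ring
  have hmono : MonotoneOn F (Set.Icc 0 1) := by
    apply monotoneOn_of_deriv_nonneg (convex_Icc 0 1) hcont.continuousOn
    · intro s hs
      rw [interior_Icc] at hs
      exact (hderiv s hs).differentiableAt.differentiableWithinAt
    · intro s hs
      rw [interior_Icc] at hs
      rw [(hderiv s hs).deriv]
      have key := aux_G hp hp1 (Set.mem_Icc.2 ⟨hs.1.le, hs.2.le⟩)
      nlinarith
  have hF0 : F 0 = 0 := by norm_num [hF]
  have := hmono (Set.left_mem_Icc.2 zero_le_one) (Set.mem_Icc.2 ⟨ht0, ht1⟩) ht0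
  rw [hF0] at this
  simp only [hF] at this
  linarith

lemma integral_sq_norm_ball {n : ℕ} (hn : 1 ≤ n) {R : ℝ} (hR : 0 ≤ R) :
    ∫ x in Metric.ball (0 : EuclideanSpace ℝ (Fin n)) R, ‖x‖^2
      = (n * (volume (Metric.ball (0:EuclideanSpace ℝ (Fin n)) 1)).toReal / (n+2)) * R^(n+2) := by
  haveI : Nonempty (Fin n) := ⟨⟨0, hn⟩⟩
  haveI : Nontrivial (EuclideanSpace ℝ (Fin n)) := inferInstance
  set E := EuclideanSpace ℝ (Fin n)
  have hdim : Module.finrank ℝ E = n := finrank_euclideanSpace_fin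
  set f : ℝ → ℝ := Set.indicator (Set.Iio R) (fun y => y^2) with hf
  have h1 : ∫ x in Metric.ball (0:E) R, ‖x‖^2 = ∫ x : E, f ‖x‖ := by
    rw [← integral_indicator measurableSet_ball]
    congr 1
    ext x
    simp only [hf, Set.indicator, mem_ball, dist_zero_right, Set.mem_Iio]
  rw [h1, MeasureTheory.integral_fun_norm_addHaar volume f, hdim]
  have h2 : ∫ y in Set.Ioi (0:ℝ), y ^ (n-1) • f y = R^(n+2)/(n+2) := by
    have : ∀ y, y ^ (n-1) • f y = Set.indicator (Set.Iio R) (fun y => y^(n-1)*y^2) y := by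
      intro y
      simp only [hf, smul_eq_mul, Set.indicator]
      split <;> simp
    simp_rw [this]
    rw [setIntegral_indicator measurableSet_Iio, Set.Ioi_inter_Iio]
    rcases le_or_gt R 0 with hR0 | hR0
    · rw [Set.Ioo_eq_empty (by linarith)]
      have : R = 0 := le_antisymm hR0 hR
      simp [this, zero_pow, Nat.add_pos_left, (by omega : n + 2 ≠ 0)]
    · have he : ∀ y ∈ Set.Ioo (0:ℝ) R, y^(n-1)*y^2 = y^(n+1) := by
        intro y hy
        rw [← pow_add]
        congr 1
        omega
      rw [setIntegral_congr_fun measurableSet_Ioo he]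
      rw [← integral_Ioc_eq_integral_Ioo, ← intervalIntegral.integral_of_le hR0.le]
      rw [integral_pow, (by omega : n + 1 + 1 = n + 2)]
      push_cast
      ring
  rw [h2]
  simp only [nsmul_eq_mul, smul_eq_mul]
  simp only [measureReal_def]
  ring

lemma bathtub_swap {α : Type*} [MeasurableSpace α] {μ : Measure α} {f : α → ℝ}
    {A C : Set α} (hA : MeasurableSet A) (hC : MeasurableSet C)
    (hμ : μ A = μ C) (hfin : μ A ≠ ⊤)
    (hfA : IntegrableOn f A μ) (hfC : IntegrableOn f C μ) {c : ℝ}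
    (h1 : ∀ x ∈ A \ C, c ≤ f x) (h2 : ∀ x ∈ C \ A, f x ≤ c) :
    ∫ x in C, f x ∂μ ≤ ∫ x in A, f x ∂μ := by
  have hfinC : μ C ≠ ⊤ := hμ ▸ hfin
  have hAC : μ (A ∩ C) ≠ ⊤ := fun h => hfin (by
    exact measure_mono_top Set.inter_subset_left h)
  have e1 : μ (A ∩ C) + μ (A \ C) = μ A := measure_inter_add_diff A hC
  have e2 : μ (C ∩ A) + μ (C \ A) = μ C := measure_inter_add_diff C hA
  have hdiff : μ (A \ C) = μ (C \ A) := by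
    rw [Set.inter_comm] at e2
    rw [hμ, ← e2] at e1
    exact (ENNReal.add_right_inj hAC).1 e1
  have hfinAC : μ (A \ C) ≠ ⊤ := fun h => hfin (measure_mono_top Set.diff_subset h)
  have hfinCA : μ (C \ A) ≠ ⊤ := fun h => hfinC (measure_mono_top Set.diff_subset h)
  have i1 : ∫ x in A ∩ C, f x ∂μ + ∫ x in A \ C, f x ∂μ = ∫ x in A, f x ∂μ :=
    integral_inter_add_diff hC hfA
  have i2 : ∫ x in C ∩ A, f x ∂μ + ∫ x in C \ A, f x ∂μ = ∫ x in C, f x ∂μ :=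
    integral_inter_add_diff hA hfC
  have j1 : c * (μ (A \ C)).toReal ≤ ∫ x in A \ C, f x ∂μ :=
    setIntegral_ge_of_const_le_real (hA.diff hC) hfinAC h1 (hfA.mono_set Set.diff_subset)
  have j2 : ∫ x in C \ A, f x ∂μ ≤ c * (μ (C \ A)).toReal := by
    calc ∫ x in C \ A, f x ∂μ ≤ ∫ _x in C \ A, c ∂μ :=
          setIntegral_mono_on (hfC.mono_set Set.diff_subset)
            (integrableOn_const hfinCA) (hC.diff hA) h2
      _ = c * (μ (C \ A)).toReal := by rw [setIntegral_const]; rw [smul_eq_mul]; rw [measureReal_def]; ring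
  have : ∫ x in A ∩ C, f x ∂μ = ∫ x in C ∩ A, f x ∂μ := by rw [Set.inter_comm]
  rw [hdiff] at j1
  linarith

/-- Stability of the second moment among sets: if `|D| = |B(0,R₀)|` then
`M₂[1_D] − M₂[1_{D*}] ≥ (2 n ωₙ R₀^{n−2})⁻¹ |D Δ D*|²` where `D* = B(0,R₀)`. -/
theorem second_moment_stability_sets {n : ℕ} (hn : 1 ≤ n) (R₀ : ℝ) (hR₀ : 0 < R₀)
    (D : Set (EuclideanSpace ℝ (Fin n))) (hD : MeasurableSet D)
    (hvol : volume D = volume (Metric.ball (0 : EuclideanSpace ℝ (Fin n)) R₀))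
    (hM2 : IntegrableOn (fun x => ‖x‖ ^ 2) D) :
    (∫ x in D, ‖x‖ ^ 2) -
        ∫ x in Metric.ball (0 : EuclideanSpace ℝ (Fin n)) R₀, ‖x‖ ^ 2 ≥
      1 / (2 * n * (volume (Metric.ball (0 : EuclideanSpace ℝ (Fin n)) 1)).toReal *
          R₀ ^ ((n : ℝ) - 2)) *
        ((volume (symmDiff D (Metric.ball (0 : EuclideanSpace ℝ (Fin n)) R₀))).toReal) ^ 2 := by
  haveI : Nonempty (Fin n) := ⟨⟨0, hn⟩⟩
  haveI hNT : Nontrivial (EuclideanSpace ℝ (Fin n)) := inferInstance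
  have hn0 : (n:ℝ) ≠ 0 := Nat.cast_ne_zero.2 (by omega)
  have hnpos : (0:ℝ) < n := by positivity
  set ω : ℝ := (volume (Metric.ball (0 : EuclideanSpace ℝ (Fin n)) 1)).toReal with hωdef
  have hωpos : 0 < ω := ENNReal.toReal_pos (Metric.measure_ball_pos volume 0 one_pos).ne'
    measure_ball_lt_top.ne
  have hballvol : ∀ r : ℝ, 0 ≤ r →
      volume (Metric.ball (0 : EuclideanSpace ℝ (Fin n)) r) = ENNReal.ofReal (ω * r ^ n) := by
    intro r hr
    rw [Measure.addHaar_ball volume 0 hr, finrank_euclideanSpace_fin,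
      ENNReal.ofReal_mul hωpos.le, hωdef,
      ENNReal.ofReal_toReal measure_ball_lt_top.ne, mul_comm]
  set B := Metric.ball (0 : EuclideanSpace ℝ (Fin n)) R₀ with hBdef
  have hmB : MeasurableSet B := measurableSet_ball
  have hBvol : volume B = ENNReal.ofReal (ω * R₀ ^ n) := hballvol R₀ hR₀.le
  have hBfin : volume B ≠ ⊤ := by rw [hBvol]; exact ENNReal.ofReal_ne_top
  have hDfin : volume D ≠ ⊤ := by rw [hvol]; exact hBfin
  have hDBfin : volume (D \ B) ≠ ⊤ := fun h => hDfin (measure_mono_top Set.diff_subset h)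
  have hBDfin : volume (B \ D) ≠ ⊤ := fun h => hBfin (measure_mono_top Set.diff_subset h)
  have hinterfin : volume (D ∩ B) ≠ ⊤ := fun h => hDfin (measure_mono_top Set.inter_subset_left h)
  have hab : volume (D \ B) = volume (B \ D) := by
    have e1 : volume (D ∩ B) + volume (D \ B) = volume D := measure_inter_add_diff D hmB
    have e2 : volume (B ∩ D) + volume (B \ D) = volume B := measure_inter_add_diff B hD
    rw [Set.inter_comm] at e2
    rw [hvol, ← e2] at e1
    exact (ENNReal.add_right_inj hinterfin).1 e1
  set m : ℝ := (volume (B \ D)).toReal with hmdef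
  have hm0 : 0 ≤ m := ENNReal.toReal_nonneg
  have hm_le : m ≤ ω * R₀ ^ n := by
    have h1 : volume (B \ D) ≤ volume B := measure_mono Set.diff_subset
    have := ENNReal.toReal_mono hBfin h1
    rwa [hBvol, ENNReal.toReal_ofReal (by positivity)] at this
  have hBD_eq : volume (B \ D) = ENNReal.ofReal m := (ENNReal.ofReal_toReal hBDfin).symm
  have hDB_eq : volume (D \ B) = ENNReal.ofReal m := hab.trans hBD_eq
  -- normalized volume defect t and exponent p
  set t : ℝ := m / (ω * R₀ ^ n) with htdef
  have ht0 : 0 ≤ t := by positivity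
  have ht1 : t ≤ 1 := by rw [htdef, div_le_one (by positivity)]; exact hm_le
  have hmt : m = t * (ω * R₀ ^ n) := by rw [htdef]; field_simp
  set p : ℝ := 2 / (n:ℝ) with hpdef
  have hp : 0 < p := by positivity
  have hp1 : p ≤ 1 ∨ p = 2 := by
    rcases eq_or_lt_of_le hn with h | h
    · right; rw [hpdef, ← h]; norm_num
    · left
      rw [hpdef, div_le_one hnpos]
      exact_mod_cast by omega
  -- the two comparison radii
  set R₁ : ℝ := R₀ * (1 + t) ^ ((n:ℝ)⁻¹) with hR₁def
  set R₂ : ℝ := R₀ * (1 - t) ^ ((n:ℝ)⁻¹) with hR₂def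
  have h1t : (0:ℝ) ≤ 1 + t := by linarith
  have h1t' : (0:ℝ) ≤ 1 - t := by linarith
  have hR₁0 : 0 ≤ R₁ := by positivity
  have hR₂0 : 0 ≤ R₂ := mul_nonneg hR₀.le (Real.rpow_nonneg h1t' _)
  have hpowaux : ∀ x : ℝ, 0 ≤ x → (x ^ ((n:ℝ)⁻¹)) ^ (n:ℕ) = x := by
    intro x hx
    rw [← Real.rpow_natCast (x ^ ((n:ℝ)⁻¹)) n, ← Real.rpow_mul hx,
      inv_mul_cancel₀ hn0, Real.rpow_one]
  have hR₁n : R₁ ^ n = R₀ ^ n * (1 + t) := by rw [hR₁def, mul_pow, hpowaux _ h1t]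
  have hR₂n : R₂ ^ n = R₀ ^ n * (1 - t) := by rw [hR₂def, mul_pow, hpowaux _ h1t']
  have hR₀R₁ : R₀ ≤ R₁ := by
    rw [← pow_le_pow_iff_left₀ hR₀.le hR₁0 (by omega : n ≠ 0), hR₁n]
    nlinarith [pow_pos hR₀ n]
  have hR₂R₀ : R₂ ≤ R₀ := by
    rw [← pow_le_pow_iff_left₀ hR₂0 hR₀.le (by omega : n ≠ 0), hR₂n]
    nlinarith [pow_pos hR₀ n]
  -- annuli
  set A₁ := Metric.ball (0 : EuclideanSpace ℝ (Fin n)) R₁ \ B with hA₁def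
  set A₂ := B \ Metric.ball (0 : EuclideanSpace ℝ (Fin n)) R₂ with hA₂def
  have volA₁ : volume A₁ = ENNReal.ofReal m := by
    rw [hA₁def, measure_diff (Metric.ball_subset_ball hR₀R₁) hmB.nullMeasurableSet hBfin,
      hballvol R₁ hR₁0, hBvol, ← ENNReal.ofReal_sub _ (by positivity)]
    congr 1
    rw [hR₁n, hmt]; ring
  have volA₂ : volume A₂ = ENNReal.ofReal m := by
    rw [hA₂def, measure_diff (Metric.ball_subset_ball hR₂R₀) measurableSet_ball.nullMeasurableSet
      (by rw [hballvol R₂ hR₂0]; exact ENNReal.ofReal_ne_top),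
      hballvol R₂ hR₂0, hBvol, ← ENNReal.ofReal_sub _ (by positivity)]
    congr 1
    rw [hR₂n, hmt]; ring
  -- integrability on balls
  have hcont : Continuous fun x : EuclideanSpace ℝ (Fin n) => ‖x‖ ^ 2 := continuous_norm.pow 2
  have hIball : ∀ r : ℝ, IntegrableOn (fun x : EuclideanSpace ℝ (Fin n) => ‖x‖ ^ 2)
      (Metric.ball 0 r) volume :=
    fun r => ((hcont.continuousOn).integrableOn_compact (isCompact_closedBall 0 r)).mono_set
      Metric.ball_subset_closedBall
  -- swap arguments
  have swap1 : ∫ x in A₁, ‖x‖ ^ 2 ≤ ∫ x in D \ B, ‖x‖ ^ 2 := by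
    apply bathtub_swap (hD.diff hmB) (measurableSet_ball.diff hmB)
      (hDB_eq.trans volA₁.symm) (by rw [hDB_eq]; exact ENNReal.ofReal_ne_top)
      (hM2.mono_set Set.diff_subset) ((hIball R₁).mono_set Set.diff_subset) (c := R₁ ^ 2)
    · rintro x ⟨⟨hxD, hxB⟩, hxA⟩
      have hx : x ∉ Metric.ball (0 : EuclideanSpace ℝ (Fin n)) R₁ := fun h => hxA ⟨h, hxB⟩
      rw [Metric.mem_ball, dist_zero_right, not_lt] at hx
      exact pow_le_pow_left₀ hR₁0 hx 2
    · rintro x ⟨⟨hx, _⟩, _⟩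
      rw [Metric.mem_ball, dist_zero_right] at hx
      exact pow_le_pow_left₀ (norm_nonneg x) hx.le 2
  have swap2 : ∫ x in B \ D, ‖x‖ ^ 2 ≤ ∫ x in A₂, ‖x‖ ^ 2 := by
    apply bathtub_swap (hmB.diff measurableSet_ball) (hmB.diff hD)
      (volA₂.trans hBD_eq.symm) (by rw [volA₂]; exact ENNReal.ofReal_ne_top)
      ((hIball R₀).mono_set Set.diff_subset) ((hIball R₀).mono_set Set.diff_subset) (c := R₂ ^ 2)
    · rintro x ⟨⟨_, hx⟩, _⟩
      rw [Metric.mem_ball, dist_zero_right, not_lt] at hx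
      exact pow_le_pow_left₀ hR₂0 hx 2
    · rintro x ⟨⟨hxB, hxD⟩, hxA⟩
      have hx : x ∈ Metric.ball (0 : EuclideanSpace ℝ (Fin n)) R₂ := by
        by_contra h
        exact hxA ⟨hxB, h⟩
      rw [Metric.mem_ball, dist_zero_right] at hx
      exact pow_le_pow_left₀ (norm_nonneg x) hx.le 2
  -- decomposition of the moment difference
  have i1 : (∫ x in D ∩ B, ‖x‖ ^ 2) + ∫ x in D \ B, ‖x‖ ^ 2 = ∫ x in D, ‖x‖ ^ 2 :=
    integral_inter_add_diff hmB hM2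
  have i2 : (∫ x in B ∩ D, ‖x‖ ^ 2) + ∫ x in B \ D, ‖x‖ ^ 2 = ∫ x in B, ‖x‖ ^ 2 :=
    integral_inter_add_diff hD (hIball R₀)
  have icomm : (∫ x in D ∩ B, ‖x‖ ^ 2) = ∫ x in B ∩ D, ‖x‖ ^ 2 := by rw [Set.inter_comm]
  -- annulus integrals
  have iA₁ : ∫ x in A₁, ‖x‖ ^ 2 =
      (∫ x in Metric.ball (0 : EuclideanSpace ℝ (Fin n)) R₁, ‖x‖ ^ 2) - ∫ x in B, ‖x‖ ^ 2 :=
    integral_diff hmB (hIball R₁) (Metric.ball_subset_ball hR₀R₁)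
  have iA₂ : ∫ x in A₂, ‖x‖ ^ 2 =
      (∫ x in B, ‖x‖ ^ 2) - ∫ x in Metric.ball (0 : EuclideanSpace ℝ (Fin n)) R₂, ‖x‖ ^ 2 :=
    integral_diff measurableSet_ball (hIball R₀) (Metric.ball_subset_ball hR₂R₀)
  have Ival : ∀ r : ℝ, 0 ≤ r → ∫ x in Metric.ball (0 : EuclideanSpace ℝ (Fin n)) r, ‖x‖ ^ 2
      = (n * ω / (n+2)) * r ^ (n+2) := fun r hr => integral_sq_norm_ball hn hr
  -- symmetric difference volume
  have hsd : (volume (symmDiff D B)).toReal = 2 * m := by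
    rw [Set.symmDiff_def]
    rw [measure_union (disjoint_sdiff_sdiff) (hmB.diff hD), hDB_eq, hBD_eq,
      ← ENNReal.ofReal_add hm0 hm0, ENNReal.toReal_ofReal (by linarith)]
    ring
  -- power identities
  have hq₁ : R₁ ^ (n+2) = R₀ ^ (n+2) * (1 + t) ^ (1 + p) := by
    rw [hR₁def, mul_pow, ← Real.rpow_natCast ((1+t) ^ ((n:ℝ)⁻¹)) (n+2), ← Real.rpow_mul h1t]
    congr 2
    rw [hpdef]
    push_cast
    field_simp
  have hq₂ : R₂ ^ (n+2) = R₀ ^ (n+2) * (1 - t) ^ (1 + p) := by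
    rw [hR₂def, mul_pow, ← Real.rpow_natCast ((1-t) ^ ((n:ℝ)⁻¹)) (n+2), ← Real.rpow_mul h1t']
    congr 2
    rw [hpdef]
    push_cast
    field_simp
  have hX : (0:ℝ) < R₀ ^ ((n:ℝ) - 2) := Real.rpow_pos_of_pos hR₀ _
  have hkey : R₀ ^ ((n:ℝ) - 2) * R₀ ^ (n+2) = (R₀ ^ n) ^ 2 := by
    rw [← pow_mul, ← Real.rpow_natCast R₀ (n+2), ← Real.rpow_natCast R₀ (n*2),
      ← Real.rpow_add hR₀]
    congr 1
    push_cast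
    ring
  have hS := aux_F hp hp1 ht0 ht1
  -- final chain
  rw [ge_iff_le, hsd]
  have step1 : (∫ x in A₁, ‖x‖ ^ 2) - ∫ x in A₂, ‖x‖ ^ 2 ≤
      (∫ x in D, ‖x‖ ^ 2) - ∫ x in B, ‖x‖ ^ 2 := by linarith
  have step2 : (∫ x in A₁, ‖x‖ ^ 2) - ∫ x in A₂, ‖x‖ ^ 2
      = (n * ω / (n+2)) * (R₀ ^ (n+2) * ((1+t)^(1+p) + (1-t)^(1+p) - 2)) := by
    rw [iA₁, iA₂, hBdef, Ival R₁ hR₁0, Ival R₂ hR₂0, Ival R₀ hR₀.le, hq₁, hq₂]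
    ring
  have hRn2 : (0:ℝ) < R₀ ^ (n+2) := pow_pos hR₀ _
  have hS' : 2*((n:ℝ)+2)*t^2 ≤ (n:ℝ)^2*((1+t)^(1+p) + (1-t)^(1+p) - 2) := by
    have h := mul_le_mul_of_nonneg_left hS (by positivity : (0:ℝ) ≤ (n:ℝ)^2)
    calc 2*((n:ℝ)+2)*t^2 = (n:ℝ)^2*(p*(1+p)*t^2) := by rw [hpdef]; field_simp
      _ ≤ _ := h
  have hfinal : (2*(t*(ω*R₀^n)))^2*((n:ℝ)+2) ≤
      (n*ω*(R₀^(n+2)*((1+t)^(1+p) + (1-t)^(1+p) - 2)))*(2*n*ω*(R₀ ^ ((n:ℝ) - 2))) := by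
    have h2 := mul_le_mul_of_nonneg_left hS'
      (show (0:ℝ) ≤ 2*ω^2*(R₀ ^ ((n:ℝ) - 2))*R₀^(n+2) by positivity)
    calc (2*(t*(ω*R₀^n)))^2*((n:ℝ)+2)
        = 2*ω^2*(R₀ ^ ((n:ℝ) - 2))*R₀^(n+2)*(2*((n:ℝ)+2)*t^2) := by linear_combination (-(4*((n:ℝ)+2)*t^2*ω^2)) * hkey
      _ ≤ 2*ω^2*(R₀ ^ ((n:ℝ) - 2))*R₀^(n+2)*((n:ℝ)^2*((1+t)^(1+p) + (1-t)^(1+p) - 2)) := h2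
      _ = _ := by ring
  have step3 : 1 / (2 * n * ω * R₀ ^ ((n:ℝ) - 2)) * (2*m) ^ 2 ≤
      (n * ω / (n+2)) * (R₀ ^ (n+2) * ((1+t)^(1+p) + (1-t)^(1+p) - 2)) := by
    rw [hmt, one_div, inv_mul_eq_div, div_le_iff₀ (by positivity),
      show (n * ω / ((n:ℝ)+2)) * (R₀ ^ (n+2) * ((1+t)^(1+p) + (1-t)^(1+p) - 2)) *
          (2 * n * ω * R₀ ^ ((n:ℝ) - 2)) =
        ((n*ω*(R₀^(n+2)*((1+t)^(1+p) + (1-t)^(1+p) - 2)))*(2*n*ω*(R₀ ^ ((n:ℝ) - 2))))/((n:ℝ)+2)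
        from by ring,
      le_div_iff₀ (by positivity)]
    exact hfinal
  linarith [step1, step2, step3]
end

section
/- For all integers n ≥ 1 and all α ∈ [0,1], the inequality ∫₀^α ((1+s)^{2/n} − (1−s)^{2/n}) ds ≥ (2/n) α² holds. -/
open Real intervalIntegral

lemma aux_pointwise {p : ℝ} (hp : 0 < p) (hp1 : p ≤ 1) {s : ℝ}
    (hs0 : 0 ≤ s) (hs1 : s ≤ 1) :
    2 * p * s ≤ (1 + s) ^ p - (1 - s) ^ p := by
  set f : ℝ → ℝ := fun t => (1 + t) ^ p - (1 - t) ^ p - 2 * p * t with hf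
  have hcont : Continuous f := by
    apply Continuous.sub
    · apply Continuous.sub
      · exact (continuous_const.add continuous_id).rpow_const (fun x => Or.inr hp.le)
      · exact (continuous_const.sub continuous_id).rpow_const (fun x => Or.inr hp.le)
    · exact continuous_const.mul continuous_id
  have key : ∀ x ∈ Set.Ioo (0:ℝ) 1,
      HasDerivAt f (p * (1+x)^(p-1) + p * (1-x)^(p-1) - 2*p) x := by
    intro x hx
    have h1x : (0:ℝ) < 1 + x := by linarith [hx.1]
    have h2x : (0:ℝ) < 1 - x := by linarith [hx.2]
    have h1 : HasDerivAt (fun t : ℝ => (1 + t) ^ p) (p * (1+x)^(p-1)) x := by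
      have : HasDerivAt (fun t : ℝ => (1 + t) ^ p) (p * (1+x)^(p-1) * 1) x :=
        (Real.hasDerivAt_rpow_const (x := 1 + x) (p := p)
        (Or.inl h1x.ne')).comp x ((hasDerivAt_id x).const_add 1)
      simpa using this
    have h2 : HasDerivAt (fun t : ℝ => (1 - t) ^ p) (-(p * (1-x)^(p-1))) x := by
      have : HasDerivAt (fun t : ℝ => (1 - t) ^ p) (p * (1-x)^(p-1) * -1) x :=
        (Real.hasDerivAt_rpow_const (x := 1 - x) (p := p)
        (Or.inl h2x.ne')).comp x ((hasDerivAt_id x).const_sub 1)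
      convert this using 1
      ring
    have h3 : HasDerivAt (fun t : ℝ => 2*p*t) (2*p) x := by
      simpa using (hasDerivAt_id x).const_mul (2*p)
    have : HasDerivAt f (p * (1+x)^(p-1) - -(p * (1-x)^(p-1)) - 2*p) x := (h1.sub h2).sub h3
    convert this using 1
    ring
  have hmono : MonotoneOn f (Set.Icc 0 1) := by
    apply monotoneOn_of_deriv_nonneg (convex_Icc 0 1) hcont.continuousOn
    · intro x hx
      rw [interior_Icc] at hx
      exact (key x hx).differentiableAt.differentiableWithinAt
    · intro x hx
      rw [interior_Icc] at hx
      rw [(key x hx).deriv]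
      have h1x : (0:ℝ) < 1 + x := by linarith [hx.1]
      have h2x : (0:ℝ) < 1 - x := by linarith [hx.2]
      set X := (1+x)^(p-1) with hX
      set Y := (1-x)^(p-1) with hY
      have hXpos : 0 < X := Real.rpow_pos_of_pos h1x _
      have hYpos : 0 < Y := Real.rpow_pos_of_pos h2x _
      have hXY : 1 ≤ X * Y := by
        rw [hX, hY, ← Real.mul_rpow h1x.le h2x.le]
        apply Real.one_le_rpow_of_pos_of_le_one_of_nonpos
        · nlinarith [hx.1, hx.2]
        · nlinarith [sq_nonneg x]
        · linarith
      have hsum : 2 ≤ X + Y := by nlinarith [sq_nonneg (X - Y)]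
      nlinarith
  have h0 : f 0 = 0 := by simp [hf, Real.one_rpow]
  have := hmono (Set.mem_Icc.mpr ⟨le_refl 0, zero_le_one⟩) (Set.mem_Icc.mpr ⟨hs0, hs1⟩) hs0
  rw [h0] at this
  simp only [hf] at this
  linarith

/-- For all integers `n ≥ 1` and `α ∈ [0,1]`,
`∫₀^α ((1+s)^{2/n} − (1−s)^{2/n}) ds ≥ (2/n) α²`. -/
theorem key_integral_inequality (n : ℕ) (hn : 1 ≤ n) (α : ℝ)
    (hα : α ∈ Set.Icc (0 : ℝ) 1) :
    ∫ s in (0:ℝ)..α, ((1 + s) ^ ((2 : ℝ) / n) - (1 - s) ^ ((2 : ℝ) / n)) ≥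
      2 / n * α ^ 2 := by
  obtain ⟨hα0, hα1⟩ := hα
  set p : ℝ := 2 / n with hp
  have hn0 : (0:ℝ) < n := by exact_mod_cast hn
  have hppos : 0 < p := by positivity
  have hpt : ∀ s ∈ Set.Icc (0:ℝ) α, 2*p*s ≤ (1+s)^p - (1-s)^p := by
    intro s hs
    have hs0 : 0 ≤ s := hs.1
    have hs1 : s ≤ 1 := le_trans hs.2 hα1
    rcases eq_or_lt_of_le hn with h1 | h2
    · -- n = 1, p = 2
      have hp2 : p = 2 := by rw [hp, ← h1]; norm_num
      rw [hp2]
      have e1 : (1+s)^(2:ℝ) = (1+s)^(2:ℕ) := by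
        rw [← Real.rpow_natCast]; norm_num
      have e2 : (1-s)^(2:ℝ) = (1-s)^(2:ℕ) := by
        rw [← Real.rpow_natCast]; norm_num
      rw [e1, e2]
      ring_nf
      nlinarith
    · have hp1 : p ≤ 1 := by
        rw [hp]
        rw [div_le_one hn0]
        exact_mod_cast h2
      exact aux_pointwise hppos hp1 hs0 hs1
  have hcont : Continuous (fun s : ℝ => (1+s)^p - (1-s)^p) := by
    apply Continuous.sub
    · exact (continuous_const.add continuous_id).rpow_const (fun x => Or.inr hppos.le)
    · exact (continuous_const.sub continuous_id).rpow_const (fun x => Or.inr hppos.le)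
  have h1 : ∫ s in (0:ℝ)..α, 2*p*s ≤ ∫ s in (0:ℝ)..α, ((1+s)^p - (1-s)^p) := by
    apply intervalIntegral.integral_mono_on hα0
    · exact (continuous_const.mul continuous_id).intervalIntegrable _ _
    · exact hcont.intervalIntegrable _ _
    · exact hpt
  have h2 : ∫ s in (0:ℝ)..α, 2*p*s = p * α^2 := by
    rw [intervalIntegral.integral_const_mul]
    rw [integral_id]
    ring
  rw [ge_iff_le]
  calc 2 / (n:ℝ) * α ^ 2 = p * α^2 := by rw [hp]
    _ = ∫ s in (0:ℝ)..α, 2*p*s := h2.symm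
    _ ≤ _ := h1
end

section
/- Let μ ∈ L¹₊(ℝ) ∩ L^∞(ℝ) (dimension n = 1) with M₂[μ] < ∞. Then M₂[μ] − M₂[μ*] ≥ (1/16) ‖μ‖_∞^{−2} ‖μ − μ*‖₁³. -/
open MeasureTheory

open Set
open scoped ENNReal symmDiff

noncomputable def J (s : Set ℝ) : ℝ≥0∞ := ∫⁻ x in s, ENNReal.ofReal (x^2)

lemma cmp_lemma (P Q : Set ℝ) (hP : MeasurableSet P) (hQ : MeasurableSet Q)
    (hPfin : volume P ≠ ⊤) (hvol : volume P = volume Q) (K : ℝ) (hK : 0 ≤ K)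
    (hPK : ∀ x ∈ P \ Q, K ≤ |x|) (hQK : ∀ x ∈ Q \ P, |x| ≤ K) :
    J Q ≤ J P := by
  have hQfin : volume Q ≠ ⊤ := hvol ▸ hPfin
  have hsplitQ : J Q = (∫⁻ x in Q ∩ P, ENNReal.ofReal (x^2)) + ∫⁻ x in Q \ P, ENNReal.ofReal (x^2) := by
    rw [J, ← lintegral_inter_add_diff _ Q hP]
  have hsplitP : J P = (∫⁻ x in P ∩ Q, ENNReal.ofReal (x^2)) + ∫⁻ x in P \ Q, ENNReal.ofReal (x^2) := by
    rw [J, ← lintegral_inter_add_diff _ P hQ]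
  have hmeq : volume (Q \ P) = volume (P \ Q) := by
    have h1 : volume (Q ∩ P) + volume (Q \ P) = volume Q := measure_inter_add_diff Q hP
    have h2 : volume (P ∩ Q) + volume (P \ Q) = volume P := measure_inter_add_diff P hQ
    rw [Set.inter_comm] at h2
    have hfin : volume (Q ∩ P) ≠ ⊤ := fun h => hQfin (by
      rw [← h1, h]; simp)
    rw [hvol, ← h1] at h2
    exact (ENNReal.add_right_inj hfin).mp h2.symm
  have hub : ∫⁻ x in Q \ P, ENNReal.ofReal (x^2) ≤ ENNReal.ofReal (K^2) * volume (Q \ P) := by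
    calc ∫⁻ x in Q \ P, ENNReal.ofReal (x^2) ≤ ∫⁻ _ in Q \ P, ENNReal.ofReal (K^2) := by
          refine setLIntegral_mono' (hQ.diff hP) fun x hx => ?_
          exact ENNReal.ofReal_le_ofReal (by nlinarith [hQK x hx, abs_nonneg x, sq_abs x])
      _ = ENNReal.ofReal (K^2) * volume (Q \ P) := by rw [setLIntegral_const]
  have hlb : ENNReal.ofReal (K^2) * volume (P \ Q) ≤ ∫⁻ x in P \ Q, ENNReal.ofReal (x^2) := by
    calc ENNReal.ofReal (K^2) * volume (P \ Q) = ∫⁻ _ in P \ Q, ENNReal.ofReal (K^2) := by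
          rw [setLIntegral_const]
      _ ≤ ∫⁻ x in P \ Q, ENNReal.ofReal (x^2) := by
          refine setLIntegral_mono' (hP.diff hQ) fun x hx => ?_
          exact ENNReal.ofReal_le_ofReal (by nlinarith [hPK x hx, abs_nonneg x, sq_abs x])
  have hQP : Q ∩ P = P ∩ Q := Set.inter_comm Q P
  rw [hsplitQ, hsplitP, hQP]
  refine add_le_add le_rfl ?_
  calc ∫⁻ x in Q \ P, ENNReal.ofReal (x^2) ≤ ENNReal.ofReal (K^2) * volume (Q \ P) := hub
    _ = ENNReal.ofReal (K^2) * volume (P \ Q) := by rw [hmeq]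
    _ ≤ _ := hlb

lemma Jball (u : ℝ) (hu : 0 ≤ u) : J (Ioo (-u) u) = ENNReal.ofReal (2*u^3/3) := by
  have hint : IntegrableOn (fun x : ℝ => x^2) (Ioo (-u) u) := by
    have : IntervalIntegrable (fun x : ℝ => x^2) volume (-u) u := intervalIntegral.intervalIntegrable_pow 2
    exact (this.1).mono_set Ioo_subset_Ioc_self
  have h1 : ENNReal.ofReal (∫ x in Ioo (-u) u, x^2) = ∫⁻ x in Ioo (-u) u, ENNReal.ofReal (x^2) :=
    ofReal_integral_eq_lintegral_ofReal hint (Filter.Eventually.of_forall fun x => sq_nonneg x)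
  have h2 : (∫ x in Ioo (-u) u, x^2) = 2*u^3/3 := by
    rw [← integral_Ioc_eq_integral_Ioo, ← intervalIntegral.integral_of_le (by linarith : -u ≤ u),
      integral_pow]
    ring
  rw [J, ← h1, h2]

lemma mem_ball_iff (x u : ℝ) : x ∈ Ioo (-u) u ↔ |x| < u := by
  rw [mem_Ioo, ← abs_lt]

lemma Jann (s t : ℝ) (h0 : 0 ≤ s) (hst : s ≤ t) :
    J (Ioo (-t) t \ Ioo (-s) s) = ENNReal.ofReal (2*(t^3 - s^3)/3) := by
  have hsub : Ioo (-s) s ⊆ Ioo (-t) t := fun x hx => by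
    rw [mem_ball_iff] at *; linarith
  have key : J (Ioo (-s) s) + J (Ioo (-t) t \ Ioo (-s) s) = J (Ioo (-t) t) := by
    have := lintegral_inter_add_diff (μ := volume) (fun x => ENNReal.ofReal (x^2))
      (Ioo (-t) t) (measurableSet_Ioo (a := -s) (b := s))
    rw [Set.inter_eq_right.mpr hsub] at this
    exact this
  rw [Jball s h0, Jball t (h0.trans hst)] at key
  have h2 : ENNReal.ofReal (2*s^3/3) + ENNReal.ofReal (2*(t^3 - s^3)/3)
      = ENNReal.ofReal (2*t^3/3) := by
    rw [← ENNReal.ofReal_add (by positivity) (by nlinarith [pow_le_pow_left₀ h0 hst 3])]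
    ring_nf
  exact (ENNReal.add_right_inj ENNReal.ofReal_ne_top).mp (key.trans h2.symm)

lemma key_level (E : Set ℝ) (hE : MeasurableSet E) (r : ℝ) (hr : 0 ≤ r)
    (hvol : volume E = ENNReal.ofReal (2*r)) :
    J (Ioo (-r) r) + (volume (E ∆ (Ioo (-r) r)))^3 / 16 ≤ J E := by
  set B := Ioo (-r) r with hBdef
  have hBm : MeasurableSet B := measurableSet_Ioo
  have volB : volume B = ENNReal.ofReal (2*r) := by
    rw [hBdef, Real.volume_Ioo]; ring_nf
  have hEfin : volume E ≠ ⊤ := by rw [hvol]; exact ENNReal.ofReal_ne_top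
  have hBfin : volume B ≠ ⊤ := by rw [volB]; exact ENNReal.ofReal_ne_top
  set A := volume (E \ B) with hAdef
  have hAfin : A ≠ ⊤ := by
    have h := measure_mono (μ := volume) (diff_subset : E \ B ⊆ E)
    exact fun h' => hEfin (top_le_iff.mp (h' ▸ h))
  have hBE : volume (B \ E) = A := by
    have h1 : volume (E ∩ B) + volume (E \ B) = volume E := measure_inter_add_diff E hBm
    have h2 : volume (B ∩ E) + volume (B \ E) = volume B := measure_inter_add_diff B hE
    rw [Set.inter_comm] at h2
    have hfin : volume (E ∩ B) ≠ ⊤ := fun h => hEfin (by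
      rw [← h1, h]; simp)
    rw [volB, ← hvol, ← h1] at h2
    exact (ENNReal.add_right_inj hfin).mp h2
  set a := A.toReal with hadef
  have ha0 : 0 ≤ a := ENNReal.toReal_nonneg
  have hA : A = ENNReal.ofReal a := (ENNReal.ofReal_toReal hAfin).symm
  have ha2r : a ≤ 2*r := by
    have : A ≤ volume B := hBE ▸ measure_mono diff_subset
    rw [volB] at this
    calc a ≤ (ENNReal.ofReal (2*r)).toReal := ENNReal.toReal_mono ENNReal.ofReal_ne_top this
      _ = 2*r := ENNReal.toReal_ofReal (by linarith)
  set c := a/2 with hcdef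
  have hca : a = 2*c := by rw [hcdef]; ring
  have hc0 : 0 ≤ c := by positivity
  have hcr : c ≤ r := by linarith
  set Aout := Ioo (-(r+c)) (r+c) \ B with hAoutdef
  set Ain := B \ Ioo (-(r-c)) (r-c) with hAindef
  have volAout : volume Aout = A := by
    have hsub : B ⊆ Ioo (-(r+c)) (r+c) := fun x hx => by
      rw [mem_ball_iff] at *; linarith
    rw [hAoutdef, measure_diff hsub hBm.nullMeasurableSet hBfin, volB, Real.volume_Ioo, hA,
      ← ENNReal.ofReal_sub _ (by linarith)]
    congr 1; linarith
  have volAin : volume Ain = A := by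
    have hsub : Ioo (-(r-c)) (r-c) ⊆ B := fun x hx => by
      rw [mem_ball_iff] at *; linarith
    rw [hAindef, measure_diff hsub measurableSet_Ioo.nullMeasurableSet
        (by rw [Real.volume_Ioo]; exact ENNReal.ofReal_ne_top),
      volB, Real.volume_Ioo, hA, ← ENNReal.ofReal_sub _ (by linarith)]
    congr 1; linarith
  have cmp1 : J Aout ≤ J (E \ B) := by
    refine cmp_lemma (E \ B) Aout (hE.diff hBm) (measurableSet_Ioo.diff hBm)
      (by rw [← hAdef]; exact hAfin) (by rw [← hAdef, volAout]) (r+c) (by linarith) ?_ ?_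
    · rintro x ⟨⟨hxE, hxB⟩, hxO⟩
      rw [hBdef, mem_ball_iff, not_lt] at hxB
      by_contra hcon
      push_neg at hcon
      apply hxO
      rw [hAoutdef, mem_diff, mem_ball_iff, hBdef, mem_ball_iff]
      exact ⟨hcon, not_lt.mpr hxB⟩
    · rintro x ⟨⟨hx1, _⟩, _⟩
      rw [mem_ball_iff] at hx1
      linarith
  have cmp2 : J (B \ E) ≤ J Ain := by
    refine cmp_lemma Ain (B \ E) (hBm.diff measurableSet_Ioo) (hBm.diff hE)
      (by rw [volAin]; exact hAfin) (by rw [volAin, hBE]) (r-c) (by linarith) ?_ ?_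
    · rintro x ⟨⟨hxB, hxI⟩, _⟩
      rw [mem_ball_iff, not_lt] at hxI
      exact hxI
    · rintro x ⟨⟨hxB, hxE⟩, hxA⟩
      rw [hAindef, mem_diff] at hxA
      push_neg at hxA
      have h := hxA hxB
      rw [mem_ball_iff] at h
      linarith
  have gap : J Ain + ENNReal.ofReal (r*a^2) ≤ J Aout := by
    have e1 : J Ain = ENNReal.ofReal (2*(r^3 - (r-c)^3)/3) := by
      rw [hAindef, hBdef]; exact Jann (r-c) r (by linarith) (by linarith)
    have e2 : J Aout = ENNReal.ofReal (2*((r+c)^3 - r^3)/3) := by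
      rw [hAoutdef, hBdef]; exact Jann r (r+c) hr (by linarith)
    rw [e1, e2, ← ENNReal.ofReal_add
      (by nlinarith [mul_nonneg hc0 (sq_nonneg (r-c)), mul_nonneg hc0 (sq_nonneg c), mul_nonneg (mul_nonneg hc0 hc0) hc0, mul_nonneg hc0 (mul_nonneg hr hr)] : (0:ℝ) ≤ 2*(r^3 - (r-c)^3)/3)
      (by positivity)]
    apply ENNReal.ofReal_le_ofReal
    rw [hca]; nlinarith [sq_nonneg c]
  have symmd : volume (E ∆ B) = ENNReal.ofReal (2*a) := by
    rw [Set.symmDiff_def, measure_union (disjoint_sdiff_sdiff) (hBm.diff hE), ← hAdef, hBE, hA,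
      ← ENNReal.ofReal_add ha0 ha0]
    congr 1; ring
  have bound : (volume (E ∆ B))^3 / 16 ≤ ENNReal.ofReal (r*a^2) := by
    rw [symmd, ← ENNReal.ofReal_pow (by linarith)]
    rw [ENNReal.div_le_iff (by norm_num) (by norm_num)]
    rw [show (16:ℝ≥0∞) = ENNReal.ofReal 16 by norm_num,
      ← ENNReal.ofReal_mul (by positivity : (0:ℝ) ≤ r*a^2)]
    apply ENNReal.ofReal_le_ofReal
    nlinarith
  have splitE : J E = J (E ∩ B) + J (E \ B) :=
    (lintegral_inter_add_diff _ E hBm).symm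
  have splitB : J B = J (E ∩ B) + J (B \ E) := by
    have h := lintegral_inter_add_diff (μ := volume) (fun x => ENNReal.ofReal (x^2)) B hE
    rw [Set.inter_comm] at h
    exact h.symm
  rw [splitB, splitE, add_assoc]
  gcongr
  calc J (B \ E) + volume (E ∆ B) ^ 3 / 16 ≤ J Ain + ENNReal.ofReal (r*a^2) := by
        gcongr
    _ ≤ J Aout := gap
    _ ≤ J (E \ B) := cmp1

set_option maxHeartbeats 1000000 in
lemma level_ineq (μ ν : ℝ → ℝ)
    (hμint : Integrable μ (volume : Measure ℝ))
    (hνmeas : Measurable ν)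
    (hνrad : ∀ x y : ℝ, |x| ≤ |y| → ν y ≤ ν x)
    (hμmeas : Measurable μ)
    (hequi : ∀ h : ℝ, 0 < h → volume {x | h < ν x} = volume {x | h < μ x})
    (t : ℝ) (ht : 0 < t) :
    J {x | t < ν x} + (volume ({x | t < μ x} ∆ {x | t < ν x}))^3 / 16 ≤ J {x | t < μ x} := by
  set E := {x | t < μ x} with hEdef
  set F := {x | t < ν x} with hFdef
  have hEm : MeasurableSet E := measurableSet_lt measurable_const hμmeas
  have hFm : MeasurableSet F := measurableSet_lt measurable_const hνmeas
  have hEfin : volume E ≠ ⊤ := by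
    have hsub : E ⊆ {x | ENNReal.ofReal t ≤ ENNReal.ofReal (μ x)} := fun x hx =>
      ENNReal.ofReal_le_ofReal (le_of_lt hx)
    have hmark := meas_ge_le_lintegral_div (μ := volume)
      (f := fun x => ENNReal.ofReal (μ x)) (hμmeas.ennreal_ofReal).aemeasurable
      (ε := ENNReal.ofReal t) (by simp [ht, ht.le]) ENNReal.ofReal_ne_top
    have hfin : (∫⁻ x, ENNReal.ofReal (μ x)) < ⊤ := hμint.lintegral_lt_top
    have hch := (measure_mono hsub).trans hmark
    intro hcon
    rw [hcon, top_le_iff, ENNReal.div_eq_top] at hch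
    rcases hch with ⟨_, h⟩ | ⟨h, _⟩
    · exact (by simp [ht, ht.le] : ENNReal.ofReal t ≠ 0) h
    · exact hfin.ne h
  have hFfin : volume F ≠ ⊤ := by rw [hequi t ht]; exact hEfin
  set m := volume F with hmdef
  set r := m.toReal / 2 with hrdef
  have hr0 : 0 ≤ r := by positivity
  have hFsub : F ⊆ Icc (-r) r := by
    intro x hx
    have hIcc : Icc (-|x|) |x| ⊆ F := by
      intro y hy
      rw [mem_Icc, ← abs_le] at hy
      exact lt_of_lt_of_le hx (hνrad y x hy)
    have hvol2 : ENNReal.ofReal (2*|x|) ≤ m := by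
      calc ENNReal.ofReal (2*|x|) = volume (Icc (-|x|) |x|) := by
            rw [Real.volume_Icc]; congr 1; ring
        _ ≤ m := measure_mono hIcc
    have h2 : 2*|x| ≤ m.toReal := by
      rw [← ENNReal.ofReal_le_iff_le_toReal hFfin]
      exact hvol2
    rw [mem_Icc, ← abs_le]
    linarith
  have volF : m = ENNReal.ofReal (2*r) := by
    rw [show (2:ℝ)*r = m.toReal by rw [hrdef]; ring, ENNReal.ofReal_toReal hFfin]
  have volE : volume E = ENNReal.ofReal (2*r) := by
    rw [← hequi t ht, ← hmdef, volF]
  have hIccF : volume (Icc (-r) r \ F) = 0 := by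
    rw [measure_diff hFsub hFm.nullMeasurableSet hFfin, Real.volume_Icc, ← hmdef, volF,
      show r - (-r) = 2*r by ring, tsub_self]
  have haeIcc : F =ᵐ[volume] Icc (-r) r := by
    rw [Filter.eventuallyEq_set]
    have h1 : volume (F \ Icc (-r) r) = 0 := by
      rw [diff_eq_empty.mpr hFsub]; simp
    have hle1 := MeasureTheory.ae_le_set.mpr h1
    have hle2 := MeasureTheory.ae_le_set.mpr hIccF
    filter_upwards [hle1, hle2] with x hx1 hx2
    exact ⟨fun h => hx1 h, fun h => hx2 h⟩
  have hae : F =ᵐ[volume] Ioo (-r) r := haeIcc.trans (Ioo_ae_eq_Icc).symm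
  have JF : J F = J (Ioo (-r) r) := setLIntegral_congr hae
  have symmcongr : volume (E ∆ F) = volume (E ∆ (Ioo (-r) r)) := by
    have hsd : (E ∆ F) ∆ (E ∆ (Ioo (-r) r)) = F ∆ (Ioo (-r) r) := by
      ext x
      simp only [Set.mem_symmDiff, Set.mem_Ioo]
      tauto
    have h0 : volume ((E ∆ F) ∆ (E ∆ (Ioo (-r) r))) = 0 := by
      rw [hsd]; exact measure_symmDiff_eq_zero_iff.mpr hae
    exact measure_congr (measure_symmDiff_eq_zero_iff.mp h0)
  rw [JF, symmcongr]
  exact key_level E hEm r hr0 volE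

-- layer cake for the weighted measure
lemma layercake_weighted (f : ℝ → ℝ) (hf : Measurable f) (hf0 : ∀ x, 0 ≤ f x) :
    ∫⁻ t in Ioi 0, J {x | t < f x} = ∫⁻ x, ENNReal.ofReal (f x * x^2) := by
  set W : ℝ → ℝ≥0∞ := fun x => ENNReal.ofReal (x^2) with hW
  have hWm : Measurable W := by
    apply Measurable.ennreal_ofReal
    exact (measurable_id.pow_const 2)
  set P : Measure ℝ := volume.withDensity W with hP
  have hlc := lintegral_eq_lintegral_meas_lt P
    (Filter.Eventually.of_forall hf0) hf.aemeasurable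
  have h1 : ∀ t : ℝ, P {x | t < f x} = J {x | t < f x} := by
    intro t
    rw [hP, withDensity_apply _ (measurableSet_lt measurable_const hf)]
    rfl
  have h2 : ∫⁻ x, ENNReal.ofReal (f x) ∂P = ∫⁻ x, ENNReal.ofReal (f x * x^2) := by
    rw [hP, lintegral_withDensity_eq_lintegral_mul volume hWm hf.ennreal_ofReal]
    apply lintegral_congr
    intro x
    simp only [Pi.mul_apply, hW]
    rw [← ENNReal.ofReal_mul (sq_nonneg x)]
    congr 1; ring
  rw [← h2, hlc]
  exact lintegral_congr fun t => (h1 t).symm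

-- Fubini for the layer difference
lemma layer_diff (f g : ℝ → ℝ) (hf : Measurable f) (hg : Measurable g) (hg0 : ∀ x, 0 ≤ g x) :
    ∫⁻ t in Ioi 0, volume ({x | t < f x} \ {x | t < g x})
      = ∫⁻ x, ENNReal.ofReal (f x - g x) := by
  set s : Set (ℝ × ℝ) := {p | g p.2 ≤ p.1 ∧ p.1 < f p.2} with hs
  have hsm : MeasurableSet s := by
    apply MeasurableSet.inter
    · exact measurableSet_le (hg.comp measurable_snd) measurable_fst
    · exact measurableSet_lt measurable_fst (hf.comp measurable_snd)
  have hswap := lintegral_lintegral_swap (μ := volume.restrict (Ioi (0:ℝ))) (ν := volume)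
    (f := fun t x => s.indicator (fun _ => (1:ℝ≥0∞)) (t, x))
    (((measurable_one.indicator hsm).comp measurable_id).aemeasurable)
  have hL : ∀ t : ℝ, volume ({x | t < f x} \ {x | t < g x})
      = ∫⁻ x, s.indicator (fun _ => (1:ℝ≥0∞)) (t, x) := by
    intro t
    have hsec : (fun x => s.indicator (fun _ => (1:ℝ≥0∞)) (t, x))
        = (Prod.mk t ⁻¹' s).indicator (1 : ℝ → ℝ≥0∞) := by
      funext x
      rfl
    rw [hsec, lintegral_indicator_one (measurable_prodMk_left hsm)]
    congr 1
    ext x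
    simp only [hs, mem_preimage, mem_setOf_eq, mem_diff, not_lt]
    tauto
  have hR : ∀ x : ℝ, (∫⁻ t in Ioi 0, s.indicator (fun _ => (1:ℝ≥0∞)) (t, x))
      = ENNReal.ofReal (f x - g x) := by
    intro x
    have hsec : (fun t => s.indicator (fun _ => (1:ℝ≥0∞)) (t, x))
        = (Ico (g x) (f x)).indicator (1 : ℝ → ℝ≥0∞) := by
      funext t
      simp only [Set.indicator_apply, hs, mem_setOf_eq, mem_Ico, Pi.one_apply]
    rw [hsec, lintegral_indicator_one measurableSet_Ico]
    rw [Measure.restrict_apply' measurableSet_Ioi]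
    rcases eq_or_lt_of_le (hg0 x) with h0 | h0
    · have : Ico (g x) (f x) ∩ Ioi 0 = Ioo 0 (f x) := by
        ext t
        simp only [mem_inter_iff, mem_Ico, mem_Ioi, mem_Ioo, ← h0]
        constructor
        · rintro ⟨⟨_, h2⟩, h3⟩; exact ⟨h3, h2⟩
        · rintro ⟨h1, h2⟩; exact ⟨⟨le_of_lt h1, h2⟩, h1⟩
      rw [this, Real.volume_Ioo, ← h0, sub_zero]
    · have : Ico (g x) (f x) ∩ Ioi 0 = Ico (g x) (f x) := by
        apply inter_eq_self_of_subset_left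
        intro t ht
        exact lt_of_lt_of_le h0 ht.1
      rw [this, Real.volume_Ico]
  calc ∫⁻ t in Ioi 0, volume ({x | t < f x} \ {x | t < g x})
      = ∫⁻ t in Ioi 0, ∫⁻ x, s.indicator (fun _ => (1:ℝ≥0∞)) (t, x) := by
        apply lintegral_congr; intro t; exact hL t
    _ = ∫⁻ x, ∫⁻ t in Ioi 0, s.indicator (fun _ => (1:ℝ≥0∞)) (t, x) := hswap
    _ = ∫⁻ x, ENNReal.ofReal (f x - g x) := by
        apply lintegral_congr; intro x; exact hR x

lemma meas_J (g : ℝ → ℝ) (hg : Measurable g) :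
    Measurable (fun t => J {x | t < g x}) := by
  have h : (fun t => J {x | t < g x})
      = fun t => ∫⁻ x, ({p : ℝ × ℝ | p.1 < g p.2}.indicator (fun p => ENNReal.ofReal (p.2^2))) (t, x) := by
    funext t
    rw [J, ← lintegral_indicator (measurableSet_lt measurable_const hg)]
    rfl
  rw [h]
  apply Measurable.lintegral_prod_right'
  exact (measurable_snd.pow_const 2).ennreal_ofReal.indicator
    (measurableSet_lt measurable_fst (hg.comp measurable_snd))

lemma meas_vol_diff (f g : ℝ → ℝ) (hf : Measurable f) (hg : Measurable g) :
    Measurable (fun t => volume ({x | t < f x} \ {x | t < g x})) := by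
  have h : (fun t => volume ({x | t < f x} \ {x | t < g x}))
      = fun t => ∫⁻ x, ({p : ℝ × ℝ | p.1 < f p.2 ∧ ¬ p.1 < g p.2}.indicator (fun _ => (1:ℝ≥0∞))) (t, x) := by
    funext t
    have hm : MeasurableSet {x | t < f x ∧ ¬ t < g x} :=
      (measurableSet_lt measurable_const hf).inter (measurableSet_lt measurable_const hg).compl
    have : ({x | t < f x} \ {x | t < g x}) = {x | t < f x ∧ ¬ t < g x} := rfl
    rw [this, ← lintegral_indicator_one hm]
    rfl
  rw [h]
  apply Measurable.lintegral_prod_right'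
  exact measurable_const.indicator
    ((measurableSet_lt measurable_fst (hf.comp measurable_snd)).inter
      (measurableSet_lt measurable_fst (hg.comp measurable_snd)).compl)

/-- Stability of the second moment in dimension one:
`M₂[μ] − M₂[μ*] ≥ (1/16) ‖μ‖_∞^{−2} ‖μ − μ*‖₁³`.
Here `ν` plays the role of the symmetric decreasing rearrangement `μ*`. -/
theorem second_moment_stability_one_dim
    (μ ν : ℝ → ℝ)
    (hμmeas : Measurable μ) (hμ0 : ∀ x, 0 ≤ μ x) (hμint : Integrable μ)
    (hμbdd : eLpNorm μ ⊤ volume < ⊤)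
    (hM2 : Integrable (fun x => μ x * x ^ 2))
    (hν0 : ∀ x, 0 ≤ ν x) (hνmeas : Measurable ν)
    (hνrad : ∀ x y : ℝ, |x| ≤ |y| → ν y ≤ ν x)
    (hequi : ∀ h : ℝ, 0 < h → volume {x | h < ν x} = volume {x | h < μ x}) :
    (∫ x, μ x * x ^ 2) - ∫ x, ν x * x ^ 2 ≥
      1 / 16 * ((eLpNorm μ ⊤ volume).toReal) ^ (-(2 : ℝ)) *
        (∫ x, |μ x - ν x|) ^ 3 := by
  set H := (eLpNorm μ ⊤ volume).toReal with hHdef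
  have hH0 : 0 ≤ H := ENNReal.toReal_nonneg
  -- a.e. bound
  have hμle : ∀ᵐ x, μ x ≤ H := by
    have h := ae_le_eLpNormEssSup (f := μ) (μ := volume)
    filter_upwards [h] with x hx
    have h1 : ((‖μ x‖₊ : ℝ≥0∞)).toReal ≤ (eLpNormEssSup μ volume).toReal :=
      ENNReal.toReal_mono (by rw [← eLpNorm_exponent_top]; exact hμbdd.ne) hx
    have h2 : ((‖μ x‖₊ : ℝ≥0∞)).toReal = |μ x| := by
      simp [Real.norm_eq_abs]
    rw [h2] at h1
    calc μ x ≤ |μ x| := le_abs_self _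
      _ ≤ _ := by rw [hHdef, eLpNorm_exponent_top]; exact h1
  have hμH : volume {x | H < μ x} = 0 := by
    have h := ae_iff.mp hμle
    simpa only [not_le] using h
  -- null sets above H
  have hnullE : ∀ t, H < t → volume {x | t < μ x} = 0 := fun t ht =>
    measure_mono_null (fun x hx => lt_trans ht hx) hμH
  have hnullF : ∀ t, H < t → volume {x | t < ν x} = 0 := fun t ht => by
    rw [hequi t (lt_of_le_of_lt hH0 ht)]; exact hnullE t ht
  -- basic lintegral identities
  have hμlint : ∫⁻ x, ENNReal.ofReal (μ x) < ⊤ := hμint.lintegral_lt_top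
  have hlcμ : ∫⁻ t in Ioi 0, volume {x | t < μ x} = ∫⁻ x, ENNReal.ofReal (μ x) :=
    (lintegral_eq_lintegral_meas_lt volume (Filter.Eventually.of_forall hμ0)
      hμmeas.aemeasurable).symm
  have hlcν : ∫⁻ t in Ioi 0, volume {x | t < ν x} = ∫⁻ x, ENNReal.ofReal (ν x) :=
    (lintegral_eq_lintegral_meas_lt volume (Filter.Eventually.of_forall hν0)
      hνmeas.aemeasurable).symm
  -- ν is integrable
  have hνlint : ∫⁻ x, ENNReal.ofReal (ν x) < ⊤ := by
    rw [← hlcν]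
    have heq : ∫⁻ t in Ioi 0, volume {x | t < ν x} = ∫⁻ t in Ioi 0, volume {x | t < μ x} :=
      setLIntegral_congr_fun measurableSet_Ioi
        (fun t ht => hequi t ht)
    rw [heq, hlcμ]
    exact hμlint
  have hνint : Integrable ν := by
    refine ⟨hνmeas.aestronglyMeasurable, ?_⟩
    rw [hasFiniteIntegral_iff_ofReal (Filter.Eventually.of_forall hν0)]
    exact hνlint
  -- the levelwise inequality, integrated
  have hlevel : ∀ t ∈ Ioi (0:ℝ),
      J {x | t < ν x} + (volume ({x | t < μ x} ∆ {x | t < ν x}))^3 / 16 ≤ J {x | t < μ x} :=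
    fun t ht => level_ineq μ ν hμint hνmeas hνrad hμmeas hequi t ht
  have hmono : ∫⁻ t in Ioi 0, (J {x | t < ν x} + (volume ({x | t < μ x} ∆ {x | t < ν x}))^3 / 16)
      ≤ ∫⁻ t in Ioi 0, J {x | t < μ x} :=
    setLIntegral_mono' measurableSet_Ioi hlevel
  -- measurability of the symmetric difference volume
  have hDmeas : Measurable (fun t => volume ({x | t < μ x} ∆ {x | t < ν x})) := by
    have hsd : ∀ t : ℝ, volume ({x | t < μ x} ∆ {x | t < ν x})
        = volume ({x | t < μ x} \ {x | t < ν x}) + volume ({x | t < ν x} \ {x | t < μ x}) := by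
      intro t
      rw [Set.symmDiff_def, measure_union disjoint_sdiff_sdiff
        ((measurableSet_lt measurable_const hνmeas).diff (measurableSet_lt measurable_const hμmeas))]
    simp only [hsd]
    exact (meas_vol_diff μ ν hμmeas hνmeas).add (meas_vol_diff ν μ hνmeas hμmeas)
  -- split the integral
  have hsplit : ∫⁻ t in Ioi 0, (J {x | t < ν x} + (volume ({x | t < μ x} ∆ {x | t < ν x}))^3 / 16)
      = (∫⁻ t in Ioi 0, J {x | t < ν x})
        + ∫⁻ t in Ioi 0, (volume ({x | t < μ x} ∆ {x | t < ν x}))^3 / 16 :=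
    lintegral_add_left ((meas_J ν hνmeas)) _
  -- identify the three integrals
  have hIμ : ∫⁻ t in Ioi 0, J {x | t < μ x} = ENNReal.ofReal (∫ x, μ x * x ^ 2) := by
    rw [layercake_weighted μ hμmeas hμ0,
      ← ofReal_integral_eq_lintegral_ofReal hM2
        (Filter.Eventually.of_forall fun x => mul_nonneg (hμ0 x) (sq_nonneg x))]
  have hM2ν : Integrable (fun x => ν x * x ^ 2) := by
    refine ⟨(hνmeas.mul ((measurable_id.pow_const 2))).aestronglyMeasurable, ?_⟩
    rw [hasFiniteIntegral_iff_ofReal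
      (Filter.Eventually.of_forall fun x => mul_nonneg (hν0 x) (sq_nonneg x))]
    calc ∫⁻ x, ENNReal.ofReal (ν x * x^2) = ∫⁻ t in Ioi 0, J {x | t < ν x} :=
          (layercake_weighted ν hνmeas hν0).symm
      _ ≤ ∫⁻ t in Ioi 0, J {x | t < μ x} :=
          setLIntegral_mono' measurableSet_Ioi fun t ht => le_trans le_self_add (hlevel t ht)
      _ = ENNReal.ofReal (∫ x, μ x * x ^ 2) := hIμ
      _ < ⊤ := ENNReal.ofReal_lt_top
  have hIν : ∫⁻ t in Ioi 0, J {x | t < ν x} = ENNReal.ofReal (∫ x, ν x * x ^ 2) := by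
    rw [layercake_weighted ν hνmeas hν0,
      ← ofReal_integral_eq_lintegral_ofReal hM2ν
        (Filter.Eventually.of_forall fun x => mul_nonneg (hν0 x) (sq_nonneg x))]
  -- the symmetric-difference integral equals the L¹ distance
  have habs : Integrable (fun x => |μ x - ν x|) := (hμint.sub hνint).abs
  have hdelta : ∫⁻ t in Ioi 0, volume ({x | t < μ x} ∆ {x | t < ν x})
      = ENNReal.ofReal (∫ x, |μ x - ν x|) := by
    have hsd : ∀ t : ℝ, volume ({x | t < μ x} ∆ {x | t < ν x})
        = volume ({x | t < μ x} \ {x | t < ν x}) + volume ({x | t < ν x} \ {x | t < μ x}) := by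
      intro t
      rw [Set.symmDiff_def, measure_union disjoint_sdiff_sdiff
        ((measurableSet_lt measurable_const hνmeas).diff (measurableSet_lt measurable_const hμmeas))]
    calc ∫⁻ t in Ioi 0, volume ({x | t < μ x} ∆ {x | t < ν x})
        = ∫⁻ t in Ioi 0, (volume ({x | t < μ x} \ {x | t < ν x})
            + volume ({x | t < ν x} \ {x | t < μ x})) := by
          apply lintegral_congr; intro t; exact hsd t
      _ = (∫⁻ t in Ioi 0, volume ({x | t < μ x} \ {x | t < ν x}))
            + ∫⁻ t in Ioi 0, volume ({x | t < ν x} \ {x | t < μ x}) :=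
          lintegral_add_left (meas_vol_diff μ ν hμmeas hνmeas) _
      _ = (∫⁻ x, ENNReal.ofReal (μ x - ν x)) + ∫⁻ x, ENNReal.ofReal (ν x - μ x) := by
          rw [layer_diff μ ν hμmeas hνmeas hν0, layer_diff ν μ hνmeas hμmeas hμ0]
      _ = ∫⁻ x, (ENNReal.ofReal (μ x - ν x) + ENNReal.ofReal (ν x - μ x)) :=
          (lintegral_add_left ((hμmeas.sub hνmeas).ennreal_ofReal) _).symm
      _ = ∫⁻ x, ENNReal.ofReal (|μ x - ν x|) := by
          apply lintegral_congr; intro x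
          rcases le_total (ν x) (μ x) with h | h
          · rw [abs_of_nonneg (by linarith), ENNReal.ofReal_eq_zero.mpr (by linarith : ν x - μ x ≤ 0)]
            simp
          · rw [abs_of_nonpos (by linarith), ENNReal.ofReal_eq_zero.mpr (by linarith : μ x - ν x ≤ 0)]
            simp
      _ = ENNReal.ofReal (∫ x, |μ x - ν x|) :=
          (ofReal_integral_eq_lintegral_ofReal habs
            (Filter.Eventually.of_forall fun x => abs_nonneg _)).symm
  set D := fun t => volume ({x | t < μ x} ∆ {x | t < ν x}) with hDdef
  set Iμ := ∫ x, μ x * x ^ 2 with hIμdef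
  set Iν := ∫ x, ν x * x ^ 2 with hIνdef
  set δr := ∫ x, |μ x - ν x| with hδrdef
  have hIμ0 : 0 ≤ Iμ := integral_nonneg fun x => mul_nonneg (hμ0 x) (sq_nonneg x)
  have hIν0 : 0 ≤ Iν := integral_nonneg fun x => mul_nonneg (hν0 x) (sq_nonneg x)
  have hδr0 : 0 ≤ δr := integral_nonneg fun x => abs_nonneg _
  have hDzero : ∀ t ∈ Ioi H, D t = 0 := by
    intro t ht
    have h1 : D t ≤ volume {x | t < μ x} + volume {x | t < ν x} :=
      le_trans (measure_mono symmDiff_subset_union) (measure_union_le _ _)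
    rw [hnullE t ht, hnullF t ht] at h1
    simpa using h1
  rcases eq_or_lt_of_le hH0 with hHeq | hHpos
  · -- degenerate case H = 0
    have hμ0ae : ∀ᵐ x, μ x = 0 := by
      filter_upwards [hμle] with x hx
      have := hμ0 x
      rw [← hHeq] at hx
      linarith
    have hν0vol : volume {x | 0 < ν x} = 0 := by
      have hU : {x | 0 < ν x} ⊆ ⋃ n : ℕ, {x | 1/((n:ℝ)+1) < ν x} := by
        intro x hx
        obtain ⟨n, hn⟩ := exists_nat_one_div_lt (show (0:ℝ) < ν x from hx)
        exact mem_iUnion.mpr ⟨n, hn⟩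
      refine measure_mono_null hU (measure_iUnion_null fun n => ?_)
      exact hnullF _ (by rw [← hHeq]; positivity)
    have hν0ae : ∀ᵐ x, ν x = 0 := by
      rw [ae_iff]
      have : {x | ¬ ν x = 0} = {x | 0 < ν x} := by
        ext x
        simp only [mem_setOf_eq]
        constructor
        · intro h; exact lt_of_le_of_ne (hν0 x) (Ne.symm h)
        · intro h; exact ne_of_gt h
      rw [this]; exact hν0vol
    have h1 : Iμ = 0 := by
      rw [hIμdef]
      apply integral_eq_zero_of_ae
      filter_upwards [hμ0ae] with x hx
      simp [hx]
    have h2 : Iν = 0 := by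
      rw [hIνdef]
      apply integral_eq_zero_of_ae
      filter_upwards [hν0ae] with x hx
      simp [hx]
    have h3 : δr = 0 := by
      rw [hδrdef]
      apply integral_eq_zero_of_ae
      filter_upwards [hμ0ae, hν0ae] with x hx1 hx2
      simp [hx1, hx2]
    rw [h1, h2, h3]
    norm_num
  · -- main case H > 0
    set Y := ENNReal.ofReal H with hYdef
    set δe := ENNReal.ofReal δr with hδedef
    set X := ∫⁻ t in Ioc 0 H, (D t)^3 with hXdef
    have hYne : Y ≠ 0 := by
      rw [hYdef]; simpa using hHpos
    have hDrestr : ∫⁻ t in Ioi 0, D t = ∫⁻ t in Ioc 0 H, D t := by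
      rw [← Ioc_union_Ioi_eq_Ioi hH0,
        lintegral_union measurableSet_Ioi (Ioc_disjoint_Ioi le_rfl)]
      have hz : ∫⁻ t in Ioi H, D t = 0 := by
        rw [setLIntegral_congr_fun measurableSet_Ioi
          (fun t ht => hDzero t ht)]
        simp
      rw [hz, add_zero]
    have hconj : Real.HolderConjugate 3 (3/2) := ⟨by norm_num, by norm_num, by norm_num⟩
    have hrpow3 : ∀ t, (D t)^(3:ℝ) = (D t)^(3:ℕ) := fun t => by
      rw [← ENNReal.rpow_natCast]; norm_num
    have hhold := ENNReal.lintegral_mul_le_Lp_mul_Lq (volume.restrict (Ioc 0 H)) hconj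
      hDmeas.aemeasurable (aemeasurable_const (b := (1:ℝ≥0∞)))
    simp only [mul_one, ENNReal.one_rpow, Pi.mul_apply, Pi.one_apply] at hhold
    rw [lintegral_one, Measure.restrict_apply_univ, Real.volume_Ioc, sub_zero] at hhold
    have hXrw : ∫⁻ t in Ioc 0 H, (D t)^(3:ℝ) = X := by
      rw [hXdef]; apply lintegral_congr; intro t; rw [hrpow3 t]
    rw [hXrw] at hhold
    -- hhold : ∫⁻ t in Ioc 0 H, D t ≤ X ^ (1/3) * (ENNReal.ofReal H) ^ (1/(3/2))
    have hcube : δe^3 ≤ X * Y^2 := by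
      have hδe : δe = ∫⁻ t in Ioc 0 H, D t := by
        rw [← hDrestr]; exact hdelta.symm
      have h1 : δe ≤ X ^ ((1:ℝ)/3) * Y ^ ((2:ℝ)/3) := by
        rw [hδe]
        convert hhold using 2
        norm_num
        rw [hYdef]
      calc δe^3 ≤ (X ^ ((1:ℝ)/3) * Y ^ ((2:ℝ)/3))^3 := pow_le_pow_left₀ zero_le h1 3
        _ = X * Y^2 := by
          rw [mul_pow, ← ENNReal.rpow_natCast (X ^ ((1:ℝ)/3)) 3,
            ← ENNReal.rpow_natCast (Y ^ ((2:ℝ)/3)) 3, ← ENNReal.rpow_mul, ← ENNReal.rpow_mul]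
          norm_num
    have hDcubed : δe^3 / (16 * Y^2) ≤ ∫⁻ t in Ioi 0, (D t)^3 / 16 := by
      have h16 : ∫⁻ t in Ioi 0, (D t)^3 / 16 ≥ X / 16 := by
        rw [hXdef]
        calc ∫⁻ t in Ioi 0, (D t)^3 / 16 ≥ ∫⁻ t in Ioc 0 H, (D t)^3 / 16 :=
              lintegral_mono_set (fun t ht => ht.1 : Ioc 0 H ⊆ Ioi 0)
          _ = (∫⁻ t in Ioc 0 H, (D t)^3) / 16 := by
              simp only [div_eq_mul_inv]
              rw [lintegral_mul_const'' _ ((hDmeas.pow_const 3).aemeasurable.restrict)]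
        -- done
      refine le_trans ?_ h16
      have hb0 : (16:ℝ≥0∞) * Y^2 ≠ 0 := mul_ne_zero (by norm_num) (pow_ne_zero 2 hYne)
      have hbt : (16:ℝ≥0∞) * Y^2 ≠ ⊤ :=
        ENNReal.mul_ne_top (by norm_num) (by rw [hYdef]; exact (ENNReal.pow_ne_top ENNReal.ofReal_ne_top))
      refine (ENNReal.div_le_iff hb0 hbt).mpr ?_
      have hc : X / 16 * (16 * Y ^ 2) = X * Y^2 := by
        rw [div_eq_mul_inv, mul_comm (16:ℝ≥0∞) (Y^2)]
        calc X * 16⁻¹ * (Y^2 * 16) = X * Y^2 * (16⁻¹ * 16) := by ring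
          _ = X * Y^2 := by rw [ENNReal.inv_mul_cancel (by norm_num) (by norm_num), mul_one]
      rw [hc]
      exact hcube
    -- assemble the ENNReal chain
    have hchain : ENNReal.ofReal Iν + δe^3 / (16 * Y^2) ≤ ENNReal.ofReal Iμ := by
      calc ENNReal.ofReal Iν + δe^3 / (16 * Y^2)
          ≤ (∫⁻ t in Ioi 0, J {x | t < ν x}) + ∫⁻ t in Ioi 0, (D t)^3 / 16 := by
            rw [hIν]; exact add_le_add le_rfl hDcubed
        _ = ∫⁻ t in Ioi 0, (J {x | t < ν x} + (D t)^3 / 16) := hsplit.symm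
        _ ≤ ∫⁻ t in Ioi 0, J {x | t < μ x} := hmono
        _ = ENNReal.ofReal Iμ := hIμ
    have hterm : δe^3 / (16 * Y^2) = ENNReal.ofReal (δr^3 / (16 * H^2)) := by
      rw [hδedef, hYdef, ← ENNReal.ofReal_pow hδr0, ← ENNReal.ofReal_pow hH0,
        ENNReal.ofReal_div_of_pos (by positivity)]
      congr 1
      rw [ENNReal.ofReal_mul (by norm_num)]
      norm_num
    have hreal : Iν + δr^3 / (16 * H^2) ≤ Iμ := by
      rw [hterm, ← ENNReal.ofReal_add hIν0 (by positivity)] at hchain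
      exact (ENNReal.ofReal_le_ofReal_iff hIμ0).mp hchain
    have hrpowH : H ^ (-(2:ℝ)) = (H^2)⁻¹ := by
      rw [Real.rpow_neg hH0]
      congr 1
      rw [show ((2:ℝ)) = ((2:ℕ):ℝ) by norm_num, Real.rpow_natCast]
    rw [ge_iff_le, hrpowH]
    have : 1 / 16 * (H ^ 2)⁻¹ * δr ^ 3 = δr^3 / (16 * H^2) := by
      field_simp
    rw [this]
    linarith
end
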